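/- arXiv:1312.2848 — 3 statements merged into one kernel-verified Lean document; each statement's English description precedes it below -/
import Mathlib

section
/- Let T = [A,B,C]_R be an I×J×K real tensor, where A ∈ ℝ^{I×R} and B ∈ ℝ^{J×R} have full column rank and the k-rank of C ∈ ℝ^{K×R} satisfies k_C ≥ 2. Then the rank of T equals R and the CPD of T is unique. -/
open scoped BigOperators

noncomputable section

/-- The k-rank of a matrix: the largest `k` such that every subset of `k` columns is
linearly independent. -/
noncomputable def kRank {α β : Type*} [Fintype α] [Fintype β] (A : Matrix α β ℝ) : ℕ :=
  sSup {k | k ≤ Fintype.card β ∧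
    ∀ s : Finset β, s.card = k → LinearIndependent ℝ fun j : s => fun i : α => A i j.1}

/-- The `I × J × K` tensor `[A, B, C]_R` built from factor matrices `A`, `B`, `C`:
`t i j k = ∑ r, A i r * B j r * C k r`. -/
def cpdTensor {I J K R : ℕ} (A : Matrix (Fin I) (Fin R) ℝ) (B : Matrix (Fin J) (Fin R) ℝ)
    (C : Matrix (Fin K) (Fin R) ℝ) : Fin I → Fin J → Fin K → ℝ :=
  fun i j k => ∑ r, A i r * B j r * C k r

/-- The rank of a third-order tensor: the minimal number of rank-1 terms whose sum is `T`. -/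
noncomputable def tensorRank {I J K : ℕ} (T : Fin I → Fin J → Fin K → ℝ) : ℕ :=
  sInf {n | ∃ A B C, T = cpdTensor (R := n) A B C}

/-- Uniqueness of the CPD with `R` terms: any two representations of `T` as a sum of `R`
rank-1 terms coincide up to a common permutation of the terms and scalings of the columns
whose product is `1` within each term. -/
def cpdUnique {I J K : ℕ} (R : ℕ) (T : Fin I → Fin J → Fin K → ℝ) : Prop :=
  ∀ (A A' : Matrix (Fin I) (Fin R) ℝ) (B B' : Matrix (Fin J) (Fin R) ℝ)
    (C C' : Matrix (Fin K) (Fin R) ℝ),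
    T = cpdTensor A B C → T = cpdTensor A' B' C' →
    ∃ (σ : Equiv.Perm (Fin R)) (la lb lc : Fin R → ℝ),
      (∀ r, la r * lb r * lc r = 1) ∧
      (∀ i r, A' i r = la r * A i (σ r)) ∧
      (∀ j r, B' j r = lb r * B j (σ r)) ∧
      (∀ k r, C' k r = lc r * C k (σ r))

namespace Stmt0Aux

open Matrix

lemma finrank_pi_fin (R : ℕ) : Module.finrank ℝ (Fin R → ℝ) = R := by simp

lemma inj_of_rank {m : Type*} [Fintype m] {R : ℕ} (A : Matrix m (Fin R) ℝ) (h : A.rank = R) :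
    Function.Injective A.mulVecLin := by
  rw [← LinearMap.ker_eq_bot]
  have h2 := LinearMap.finrank_range_add_finrank_ker A.mulVecLin
  rw [finrank_pi_fin] at h2
  rw [Matrix.rank] at h
  have h3 : Module.finrank ℝ (LinearMap.ker A.mulVecLin) = 0 := by omega
  exact Submodule.finrank_eq_zero.mp h3

lemma rank_of_inj {m : Type*} [Fintype m] {R : ℕ} (A : Matrix m (Fin R) ℝ)
    (h : Function.Injective A.mulVecLin) : A.rank = R := by
  have h2 := LinearMap.finrank_range_add_finrank_ker A.mulVecLin
  rw [finrank_pi_fin] at h2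
  rw [← LinearMap.ker_eq_bot] at h
  rw [h, finrank_bot] at h2
  rw [Matrix.rank]
  omega

lemma surj_of_inj_transpose {R : ℕ} {n : Type*} [Fintype n] (N : Matrix (Fin R) n ℝ)
    (h : Function.Injective Nᵀ.mulVecLin) : Function.Surjective N.mulVecLin := by
  have hr : N.rank = R := by rw [← Matrix.rank_transpose]; exact rank_of_inj _ h
  rw [← LinearMap.range_eq_top]
  apply Submodule.eq_top_of_finrank_eq
  rw [finrank_pi_fin]
  exact hr

lemma cancel_left {m R n : ℕ} (A : Matrix (Fin m) (Fin R) ℝ)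
    (hA : Function.Injective A.mulVecLin) {X Y : Matrix (Fin R) (Fin n) ℝ}
    (h : A * X = A * Y) : X = Y := by
  have hv : ∀ v, X *ᵥ v = Y *ᵥ v := by
    intro v
    apply hA
    show A *ᵥ (X *ᵥ v) = A *ᵥ (Y *ᵥ v)
    rw [Matrix.mulVec_mulVec, Matrix.mulVec_mulVec, h]
  ext t s
  have := congrFun (hv (Pi.single s 1)) t
  simpa [Matrix.mulVec_single_one] using this

lemma cancel_right {m R n : ℕ} (B : Matrix (Fin m) (Fin R) ℝ)
    (hB : Function.Injective B.mulVecLin) {X Y : Matrix (Fin n) (Fin R) ℝ}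
    (h : X * Bᵀ = Y * Bᵀ) : X = Y := by
  have h2 : B * Xᵀ = B * Yᵀ := by
    have := congrArg Matrix.transpose h
    rwa [Matrix.transpose_mul, Matrix.transpose_mul, Matrix.transpose_transpose] at this
  have := cancel_left B hB h2
  have := congrArg Matrix.transpose this
  rwa [Matrix.transpose_transpose, Matrix.transpose_transpose] at this

/-- The Khatri-Rao-style matrix whose rows are `b_r ⊗ c_r` (indexed by the column index `r`). -/
def kr {J K R : ℕ} (B : Matrix (Fin J) (Fin R) ℝ) (C : Matrix (Fin K) (Fin R) ℝ) :
    Matrix (Fin R) (Fin J × Fin K) ℝ :=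
  Matrix.of fun r p => B p.1 r * C p.2 r

lemma kr_transpose_inj {J K R : ℕ} (B : Matrix (Fin J) (Fin R) ℝ) (C : Matrix (Fin K) (Fin R) ℝ)
    (injB : Function.Injective B.mulVecLin) (hC : ∀ r, ∃ k, C k r ≠ 0) :
    Function.Injective (kr B C)ᵀ.mulVecLin := by
  rw [injective_iff_map_eq_zero]
  intro g hg
  have h1 : ∀ (j : Fin J) (k : Fin K), ∑ r, B j r * C k r * g r = 0 := by
    intro j k
    have := congrFun hg (j, k)
    simp only [Matrix.mulVecLin_apply, Matrix.mulVec, Matrix.transpose_apply, dotProduct, kr,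
      Matrix.of_apply, Pi.zero_apply] at this
    rw [← this]
  have h3 : ∀ (k : Fin K) (r : Fin R), C k r * g r = 0 := by
    intro k
    have h2 : B.mulVecLin (fun r => C k r * g r) = B.mulVecLin 0 := by
      rw [map_zero]
      funext j
      simp only [Matrix.mulVecLin_apply, Matrix.mulVec, dotProduct, Pi.zero_apply]
      rw [← h1 j k]
      exact Finset.sum_congr rfl fun r _ => by ring
    have := injB h2
    intro r
    exact congrFun this r
  funext r
  by_contra hgr
  obtain ⟨k, hk⟩ := hC r
  rcases mul_eq_zero.mp (h3 k r) with h | h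
  · exact hk h
  · exact hgr h

lemma factor_exists {m R : ℕ} {n : Type*} [Fintype n] (A : Matrix (Fin m) (Fin R) ℝ)
    (N : Matrix (Fin R) n ℝ)
    (A' : Matrix (Fin m) (Fin R) ℝ) (N' : Matrix (Fin R) n ℝ)
    (hA : A.rank = R) (hsurj : Function.Surjective N.mulVecLin) (heq : A * N = A' * N') :
    ∃ F : Matrix (Fin R) (Fin R) ℝ, IsUnit F.det ∧ A' = A * F := by
  have hrange : LinearMap.range (A * N).mulVecLin = LinearMap.range A.mulVecLin := by
    rw [Matrix.mulVecLin_mul]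
    exact LinearMap.range_comp_of_range_eq_top _ (LinearMap.range_eq_top.mpr hsurj)
  have hrange2 : LinearMap.range (A' * N').mulVecLin ≤ LinearMap.range A'.mulVecLin := by
    rw [Matrix.mulVecLin_mul]
    exact LinearMap.range_comp_le_range _ _
  have hle : LinearMap.range A.mulVecLin ≤ LinearMap.range A'.mulVecLin := by
    rw [← hrange, heq]; exact hrange2
  have hfr : Module.finrank ℝ (LinearMap.range A'.mulVecLin) ≤
      Module.finrank ℝ (LinearMap.range A.mulVecLin) := by
    rw [show Module.finrank ℝ (LinearMap.range A.mulVecLin) = R from hA]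
    have := Matrix.rank_le_card_width A'
    simpa [Matrix.rank] using this
  have hreq : LinearMap.range A.mulVecLin = LinearMap.range A'.mulVecLin :=
    Submodule.eq_of_le_of_finrank_le hle hfr
  have hA' : A'.rank = R := by
    have : A'.rank = Module.finrank ℝ (LinearMap.range A'.mulVecLin) := rfl
    rw [this, ← hreq]; exact hA
  have hcol : ∀ r, ∃ v : Fin R → ℝ, A *ᵥ v = A'ᵀ r := by
    intro r
    have hmem : A'ᵀ r ∈ LinearMap.range A'.mulVecLin :=
      ⟨Pi.single r 1, Matrix.mulVec_single_one A' r⟩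
    rw [← hreq] at hmem
    obtain ⟨v, hv⟩ := hmem
    exact ⟨v, hv⟩
  choose f hf using hcol
  refine ⟨Matrix.of fun t r => f r t, ?_, ?_⟩
  case refine_2 =>
    ext i r
    rw [Matrix.mul_apply]
    have := congrFun (hf r) i
    simp only [Matrix.mulVec, dotProduct, Matrix.transpose_apply] at this
    simpa [Matrix.of_apply] using this.symm
  case refine_1 =>
    set F : Matrix (Fin R) (Fin R) ℝ := Matrix.of fun t r => f r t with hF
    have hAF : A' = A * F := by
      ext i r
      rw [Matrix.mul_apply]
      have := congrFun (hf r) i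
      simp only [Matrix.mulVec, dotProduct, Matrix.transpose_apply] at this
      simpa [Matrix.of_apply, hF] using this.symm
    rw [← Matrix.isUnit_iff_isUnit_det, ← Matrix.mulVec_injective_iff_isUnit]
    intro x y hxy
    apply inj_of_rank A' hA'
    show A' *ᵥ x = A' *ᵥ y
    rw [hAF, ← Matrix.mulVec_mulVec, ← Matrix.mulVec_mulVec, hxy]


def unf1 {I J K : ℕ} (T : Fin I → Fin J → Fin K → ℝ) : Matrix (Fin I) (Fin J × Fin K) ℝ :=
  Matrix.of fun i p => T i p.1 p.2

def unf2 {I J K : ℕ} (T : Fin I → Fin J → Fin K → ℝ) : Matrix (Fin J) (Fin I × Fin K) ℝ :=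
  Matrix.of fun j p => T p.1 j p.2

lemma unf1_cpd {I J K R : ℕ} (A : Matrix (Fin I) (Fin R) ℝ) (B : Matrix (Fin J) (Fin R) ℝ)
    (C : Matrix (Fin K) (Fin R) ℝ) : unf1 (cpdTensor A B C) = A * kr B C := by
  ext i p
  rw [Matrix.mul_apply]
  simp only [unf1, cpdTensor, kr, Matrix.of_apply]
  exact Finset.sum_congr rfl fun r _ => by ring

lemma unf2_cpd {I J K R : ℕ} (A : Matrix (Fin I) (Fin R) ℝ) (B : Matrix (Fin J) (Fin R) ℝ)
    (C : Matrix (Fin K) (Fin R) ℝ) : unf2 (cpdTensor A B C) = B * kr A C := by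
  ext j p
  rw [Matrix.mul_apply]
  simp only [unf2, cpdTensor, kr, Matrix.of_apply]
  exact Finset.sum_congr rfl fun r _ => by ring

lemma rank_unf1 {I J K R : ℕ} (A : Matrix (Fin I) (Fin R) ℝ) (B : Matrix (Fin J) (Fin R) ℝ)
    (C : Matrix (Fin K) (Fin R) ℝ) (hA : A.rank = R)
    (hsurj : Function.Surjective (kr B C).mulVecLin) :
    (unf1 (cpdTensor A B C)).rank = R := by
  rw [unf1_cpd]
  show Module.finrank ℝ (LinearMap.range (A * kr B C).mulVecLin) = R
  rw [Matrix.mulVecLin_mul,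
    LinearMap.range_comp_of_range_eq_top _ (LinearMap.range_eq_top.mpr hsurj)]
  exact hA

lemma slice_entry {I J K R : ℕ} (A : Matrix (Fin I) (Fin R) ℝ) (B : Matrix (Fin J) (Fin R) ℝ)
    (C : Matrix (Fin K) (Fin R) ℝ) (k : Fin K) (i : Fin I) (j : Fin J) :
    (A * Matrix.diagonal (fun r => C k r) * Bᵀ) i j = cpdTensor A B C i j k := by
  rw [Matrix.mul_apply]
  simp only [Matrix.mul_diagonal, Matrix.transpose_apply, cpdTensor]
  exact Finset.sum_congr rfl fun r _ => by ring

lemma slices_eq {I J K R : ℕ} {A A' : Matrix (Fin I) (Fin R) ℝ} {B B' : Matrix (Fin J) (Fin R) ℝ}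
    {C C' : Matrix (Fin K) (Fin R) ℝ} (h : cpdTensor A B C = cpdTensor A' B' C') (k : Fin K) :
    A * Matrix.diagonal (fun r => C k r) * Bᵀ = A' * Matrix.diagonal (fun r => C' k r) * B'ᵀ := by
  ext i j
  rw [slice_entry, slice_entry, h]

lemma mde {R : ℕ} (F H : Matrix (Fin R) (Fin R) ℝ) (d : Fin R → ℝ) (r s : Fin R) :
    (F * (Matrix.diagonal d * H)) r s = ∑ t, F r t * (d t * H t s) := by
  rw [Matrix.mul_apply]
  exact Finset.sum_congr rfl fun t _ => by rw [Matrix.diagonal_mul]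

/-- From `2 ≤ kRank C`: `2 ≤ R` and every pair of columns is linearly independent. -/
lemma pair_li_of_kRank {K R : ℕ} (C : Matrix (Fin K) (Fin R) ℝ) (hC : 2 ≤ kRank C) :
    2 ≤ R ∧ ∀ s s' : Fin R, s ≠ s' → ∀ a b : ℝ,
      (∀ k, a * C k s + b * C k s' = 0) → a = 0 ∧ b = 0 := by
  classical
  set S : Set ℕ := {k | k ≤ Fintype.card (Fin R) ∧
    ∀ s : Finset (Fin R), s.card = k →
      LinearIndependent ℝ fun j : s => fun i : Fin K => C i j.1} with hS
  have h0 : (0 : ℕ) ∈ S := by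
    refine ⟨Nat.zero_le _, fun s hs => ?_⟩
    rw [Finset.card_eq_zero] at hs
    subst hs
    exact linearIndependent_empty_type
  have hbdd : BddAbove S := ⟨Fintype.card (Fin R), fun k hk => hk.1⟩
  have hmem : kRank C ∈ S := Nat.sSup_mem ⟨0, h0⟩ hbdd
  have hmR : kRank C ≤ R := by simpa using hmem.1
  have hR2 : 2 ≤ R := le_trans hC hmR
  refine ⟨hR2, fun s s' hne a b hab => ?_⟩
  have hcard2 : ({s, s'} : Finset (Fin R)).card = 2 := by
    rw [Finset.card_insert_of_notMem (by simpa using hne), Finset.card_singleton]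
  obtain ⟨t, hsub, hcard⟩ := Finset.exists_superset_card_eq
    (show ({s, s'} : Finset (Fin R)).card ≤ kRank C by omega)
    (by simpa using hmR)
  have hli := hmem.2 t hcard
  have hli2 : LinearIndependent ℝ fun j : ({s, s'} : Finset (Fin R)) =>
      fun i : Fin K => C i j.1 := by
    have := hli.comp (fun j : ({s, s'} : Finset (Fin R)) => (⟨j.1, hsub j.2⟩ : t))
      (fun x y hxy => by
        apply Subtype.ext
        exact congrArg (fun z : {u // u ∈ t} => z.1) hxy)
    exact this
  have hs_mem : s ∈ ({s, s'} : Finset (Fin R)) := by simp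
  have hs'_mem : s' ∈ ({s, s'} : Finset (Fin R)) := by simp
  have hsum : ∑ j : ({s, s'} : Finset (Fin R)),
      (if j.1 = s then a else b) • (fun i : Fin K => C i j.1) = 0 := by
    rw [Finset.sum_coe_sort (({s, s'} : Finset (Fin R)))
      (fun x => (if x = s then a else b) • (fun i : Fin K => C i x))]
    rw [Finset.sum_pair hne]
    simp only [if_pos rfl, if_neg (Ne.symm hne)]
    funext k
    simpa using hab k
  have := Fintype.linearIndependent_iff.mp hli2
    (fun j => if j.1 = s then a else b) hsum
  constructor
  · have := this ⟨s, hs_mem⟩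
    simpa using this
  · have := this ⟨s', hs'_mem⟩
    simpa [Ne.symm hne] using this

/-- Existence of a vector with nonzero dot product against every (nonzero) column. -/
lemma exists_dot_ne {K R : ℕ} (C : Matrix (Fin K) (Fin R) ℝ) (h : ∀ r, ∃ k, C k r ≠ 0) :
    ∃ x : Fin K → ℝ, ∀ r, ∑ k, x k * C k r ≠ 0 := by
  classical
  suffices H : ∀ s : Finset (Fin R), ∃ x : Fin K → ℝ, ∀ r ∈ s, ∑ k, x k * C k r ≠ 0 by
    obtain ⟨x, hx⟩ := H Finset.univ
    exact ⟨x, fun r => hx r (Finset.mem_univ r)⟩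
  intro s
  induction s using Finset.induction_on with
  | empty => exact ⟨0, fun r hr => absurd hr (Finset.notMem_empty r)⟩
  | @insert r₀ s hr₀ ih =>
    obtain ⟨x, hx⟩ := ih
    set y : Fin K → ℝ := fun k => C k r₀ with hy
    have hyr₀ : 0 < ∑ k, y k * C k r₀ := by
      obtain ⟨k₀, hk₀⟩ := h r₀
      apply Finset.sum_pos' (fun k _ => mul_self_nonneg _)
      exact ⟨k₀, Finset.mem_univ k₀, mul_self_pos.mpr hk₀⟩
    set bad : Finset ℝ := insert 0 ((insert r₀ s).image
      fun r => -(∑ k, x k * C k r) / (∑ k, y k * C k r)) with hbad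
    obtain ⟨t, ht⟩ := Infinite.exists_notMem_finset bad
    have ht0 : t ≠ 0 := fun h0 => ht (by rw [h0]; exact Finset.mem_insert_self 0 _)
    refine ⟨fun k => x k + t * y k, fun r hr => ?_⟩
    have hsplit : ∑ k, (x k + t * y k) * C k r
        = (∑ k, x k * C k r) + t * ∑ k, y k * C k r := by
      rw [Finset.mul_sum, ← Finset.sum_add_distrib]
      exact Finset.sum_congr rfl fun k _ => by ring
    rw [hsplit]
    by_cases hdy : (∑ k, y k * C k r) = 0
    · rw [hdy, mul_zero, add_zero]
      rcases Finset.mem_insert.mp hr with rfl | hrs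
      · exact absurd hdy (ne_of_gt hyr₀)
      · exact hx r hrs
    · intro hzero
      apply ht
      apply Finset.mem_insert_of_mem
      apply Finset.mem_image.mpr
      refine ⟨r, hr, ?_⟩
      field_simp
      linarith [hzero]


lemma key {I J K R : ℕ} (A : Matrix (Fin I) (Fin R) ℝ) (B : Matrix (Fin J) (Fin R) ℝ)
    (C : Matrix (Fin K) (Fin R) ℝ) (hA : A.rank = R) (hB : B.rank = R) (hR2 : 2 ≤ R)
    (hpair : ∀ s s' : Fin R, s ≠ s' → ∀ a b : ℝ,
      (∀ k, a * C k s + b * C k s' = 0) → a = 0 ∧ b = 0)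
    (A' : Matrix (Fin I) (Fin R) ℝ) (B' : Matrix (Fin J) (Fin R) ℝ)
    (C' : Matrix (Fin K) (Fin R) ℝ)
    (heq : cpdTensor A B C = cpdTensor A' B' C') :
    ∃ (σ : Equiv.Perm (Fin R)) (la lb lc : Fin R → ℝ),
      (∀ r, la r * lb r * lc r = 1) ∧
      (∀ i r, A' i r = la r * A i (σ r)) ∧
      (∀ j r, B' j r = lb r * B j (σ r)) ∧
      (∀ k r, C' k r = lc r * C k (σ r)) := by
  classical
  have injA := inj_of_rank A hA
  have injB := inj_of_rank B hB
  have cnz : ∀ r, ∃ k, C k r ≠ 0 := by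
    intro r
    by_contra hcon
    push_neg at hcon
    obtain ⟨r', hr'⟩ := Fintype.exists_ne_of_one_lt_card (by simpa using (show 1 < R by omega)) r
    have h10 := (hpair r r' (Ne.symm hr') 1 0 (fun k => by rw [hcon k]; ring)).1
    exact one_ne_zero h10
  have surj1 : Function.Surjective (kr B C).mulVecLin :=
    surj_of_inj_transpose _ (kr_transpose_inj B C injB cnz)
  have surj2 : Function.Surjective (kr A C).mulVecLin :=
    surj_of_inj_transpose _ (kr_transpose_inj A C injA cnz)
  have hunf1 : A * kr B C = A' * kr B' C' := by rw [← unf1_cpd, ← unf1_cpd, heq]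
  have hunf2 : B * kr A C = B' * kr A' C' := by rw [← unf2_cpd, ← unf2_cpd, heq]
  obtain ⟨F, hFdet, hAF⟩ := factor_exists A (kr B C) A' (kr B' C') hA surj1 hunf1
  obtain ⟨G, hGdet, hBG⟩ := factor_exists B (kr A C) B' (kr A' C') hB surj2 hunf2
  set H : Matrix (Fin R) (Fin R) ℝ := Gᵀ with hH
  have hHdet : IsUnit H.det := by rw [hH, Matrix.det_transpose]; exact hGdet
  have hslice : ∀ k : Fin K,
      F * (Matrix.diagonal (fun r => C' k r) * H) = Matrix.diagonal (fun r => C k r) := by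
    intro k
    have h1 := slices_eq heq k
    rw [hAF, hBG, Matrix.transpose_mul] at h1
    have h2 : (A * Matrix.diagonal (fun r => C k r)) * Bᵀ
        = (A * (F * (Matrix.diagonal (fun r => C' k r) * Gᵀ))) * Bᵀ := by
      simp only [Matrix.mul_assoc] at h1 ⊢
      exact h1
    have h3 := cancel_right B injB h2
    have h4 := cancel_left A injA h3
    rw [hH]
    exact h4.symm
  obtain ⟨x, hx⟩ := exists_dot_ne C cnz
  set w : Fin R → ℝ := fun r => ∑ k, x k * C k r with hw
  set u : Fin R → ℝ := fun t => ∑ k, x k * C' k t with hu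
  have hcomb : F * (Matrix.diagonal u * H) = Matrix.diagonal w := by
    ext r s
    rw [mde]
    have hterm : ∀ t, F r t * (u t * H t s) = ∑ k, x k * (F r t * (C' k t * H t s)) := by
      intro t
      simp only [hu]
      rw [Finset.sum_mul, Finset.mul_sum]
      exact Finset.sum_congr rfl fun k _ => by ring
    rw [Finset.sum_congr rfl (fun t _ => hterm t), Finset.sum_comm]
    have hk : ∀ k : Fin K, ∑ t, F r t * (C' k t * H t s)
        = Matrix.diagonal (fun r => C k r) r s := by
      intro k
      rw [← mde, hslice k]
    have step1 : ∑ k, ∑ t, x k * (F r t * (C' k t * H t s))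
        = ∑ k, x k * (Matrix.diagonal (fun r => C k r) r s) := by
      refine Finset.sum_congr rfl fun k _ => ?_
      rw [← hk k, Finset.mul_sum]
    rw [step1]
    by_cases hrs : r = s
    · subst hrs
      simp only [Matrix.diagonal_apply_eq, hw]
    · simp [Matrix.diagonal_apply_ne _ hrs]
  have hwne : ∀ r, w r ≠ 0 := hx
  have hdet := congrArg Matrix.det hcomb
  rw [Matrix.det_mul, Matrix.det_mul, Matrix.det_diagonal, Matrix.det_diagonal] at hdet
  have hprodw : (∏ i, w i) ≠ 0 := Finset.prod_ne_zero_iff.mpr fun r _ => hwne r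
  have hune : ∀ t, u t ≠ 0 := by
    intro t ht
    apply hprodw
    rw [← hdet, Finset.prod_eq_zero (Finset.mem_univ t) ht]
    ring
  have hFdetne : F.det ≠ 0 := hFdet.ne_zero
  have hker : ∀ (k : Fin K) (t s : Fin R),
      C' k t * (H t s * w s) = u t * (H t s * C k s) := by
    intro k t s
    have e1 : F * ((Matrix.diagonal (fun r => C' k r) * H) * Matrix.diagonal w)
        = F * ((Matrix.diagonal u * H) * Matrix.diagonal (fun r => C k r)) := by
      have l1 : F * ((Matrix.diagonal (fun r => C' k r) * H) * Matrix.diagonal w)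
          = (F * (Matrix.diagonal (fun r => C' k r) * H)) * Matrix.diagonal w :=
        (Matrix.mul_assoc _ _ _).symm
      have l2 : F * ((Matrix.diagonal u * H) * Matrix.diagonal (fun r => C k r))
          = (F * (Matrix.diagonal u * H)) * Matrix.diagonal (fun r => C k r) :=
        (Matrix.mul_assoc _ _ _).symm
      rw [l1, l2, hslice k, hcomb, Matrix.diagonal_mul_diagonal, Matrix.diagonal_mul_diagonal,
        show (fun i => C k i * w i) = (fun i => w i * C k i) from funext fun i => mul_comm _ _]
    have e2 : (Matrix.diagonal (fun r => C' k r) * H) * Matrix.diagonal w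
        = (Matrix.diagonal u * H) * Matrix.diagonal (fun r => C k r) := by
      have e3 := congrArg (fun M => F⁻¹ * M) e1
      simpa [← Matrix.mul_assoc, Matrix.nonsing_inv_mul F (isUnit_iff_ne_zero.mpr hFdetne)]
        using e3
    have e4 := congrFun (congrFun e2 t) s
    simp only [Matrix.mul_diagonal, Matrix.diagonal_mul] at e4
    linear_combination e4
  have hrow : ∀ t, ∃ s, H t s ≠ 0 := by
    intro t
    by_contra hcon
    push_neg at hcon
    have : H.det = 0 := Matrix.det_eq_zero_of_row_eq_zero t fun s => hcon s
    exact hHdet.ne_zero this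
  have hrel : ∀ t s, H t s ≠ 0 → ∀ k, w s * C' k t = u t * C k s := by
    intro t s hts k
    apply mul_left_cancel₀ hts
    linear_combination hker k t s
  have huniq : ∀ t s s', H t s ≠ 0 → H t s' ≠ 0 → s = s' := by
    intro t s s' hs hs'
    by_contra hne
    have h0 : ∀ k, (u t * w s') * C k s + (-(u t * w s)) * C k s' = 0 := by
      intro k
      have h1 := hrel t s hs k
      have h2 := hrel t s' hs' k
      linear_combination w s * h2 - w s' * h1
    obtain ⟨ha, _⟩ := hpair s s' hne _ _ h0
    exact mul_ne_zero (hune t) (hwne s') ha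
  choose τ0 hτ0 using hrow
  have hHent : ∀ t s, H t s = if s = τ0 t then H t (τ0 t) else 0 := by
    intro t s
    by_cases hcase : s = τ0 t
    · rw [if_pos hcase, hcase]
    · rw [if_neg hcase]
      by_contra hts
      exact hcase (huniq t s (τ0 t) hts (hτ0 t))
  have hτinj : Function.Injective τ0 := by
    intro t t' htt
    by_contra hne
    have hHTdet : IsUnit Hᵀ.det := by rw [Matrix.det_transpose]; exact hHdet
    have hinj : Function.Injective Hᵀ.mulVec :=
      Matrix.mulVec_injective_iff_isUnit.mpr ((Matrix.isUnit_iff_isUnit_det _).mpr hHTdet)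
    have hveq : Hᵀ *ᵥ (H t' (τ0 t') • (Pi.single t 1 : Fin R → ℝ) - H t (τ0 t) • (Pi.single t' 1 : Fin R → ℝ))
        = Hᵀ *ᵥ 0 := by
      rw [Matrix.mulVec_zero, Matrix.mulVec_sub, Matrix.mulVec_smul, Matrix.mulVec_smul,
        Matrix.mulVec_single_one, Matrix.mulVec_single_one]
      funext s
      simp only [Pi.sub_apply, Pi.smul_apply, Matrix.transpose_transpose, smul_eq_mul,
        Pi.zero_apply]
      show H t' (τ0 t') * H t s - H t (τ0 t) * H t' s = 0
      rw [hHent t s, hHent t' s, ← htt]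
      by_cases hcase : s = τ0 t
      · rw [if_pos hcase, if_pos hcase]; ring
      · rw [if_neg hcase, if_neg hcase]; ring
    have hv0 := hinj hveq
    have hv0t := congrFun hv0 t
    simp [Pi.single_apply, hne, Ne.symm hne] at hv0t
    exact hτ0 t' hv0t
  have hτbij : Function.Bijective τ0 := Finite.injective_iff_bijective.mp hτinj
  let τ : Equiv.Perm (Fin R) := Equiv.ofBijective τ0 hτbij
  have hτapp : ∀ t, τ t = τ0 t := fun t => rfl
  have hτsymm : ∀ r, τ0 (τ.symm r) = r := fun r => τ.apply_symm_apply r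
  set F' : Matrix (Fin R) (Fin R) ℝ :=
    Matrix.of (fun r t => if r = τ0 t then w r / (u t * H t (τ0 t)) else 0) with hF'
  have hcomb' : F' * (Matrix.diagonal u * H) = Matrix.diagonal w := by
    ext r s
    rw [mde]
    rw [Finset.sum_eq_single_of_mem (τ.symm r) (Finset.mem_univ _) ?side]
    case side =>
      intro t _ htne
      have hrt : r ≠ τ0 t := by
        intro hrt
        apply htne
        exact (Equiv.eq_symm_apply τ).mpr hrt.symm
      simp [hF', hrt]
    · have h1 : τ0 (τ.symm r) = r := hτsymm r
      have hFv : F' r (τ.symm r) = w r / (u (τ.symm r) * H (τ.symm r) r) := by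
        simp [hF', h1]
      have hHv : H (τ.symm r) s = if s = r then H (τ.symm r) r else 0 := by
        rw [hHent (τ.symm r) s, h1]
      have hvne : H (τ.symm r) r ≠ 0 := by
        have := hτ0 (τ.symm r)
        rwa [h1] at this
      rw [hFv, hHv]
      by_cases hrs : s = r
      · rw [if_pos hrs, hrs, Matrix.diagonal_apply_eq]
        exact div_mul_cancel₀ _ (mul_ne_zero (hune _) hvne)
      · rw [if_neg hrs, mul_zero, mul_zero, Matrix.diagonal_apply_ne _ (Ne.symm hrs)]
  have hXdet : IsUnit (Matrix.diagonal u * H).det := by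
    rw [Matrix.det_mul, Matrix.det_diagonal]
    exact (isUnit_iff_ne_zero.mpr (Finset.prod_ne_zero_iff.mpr fun t _ => hune t)).mul hHdet
  have hFF' : F = F' := by
    have e := hcomb.trans hcomb'.symm
    have e2 := congrArg (fun M => M * (Matrix.diagonal u * H)⁻¹) e
    simpa [Matrix.mul_assoc, Matrix.mul_nonsing_inv _ hXdet] using e2
  refine ⟨τ, fun r => w (τ0 r) / (u r * H r (τ0 r)), fun r => H r (τ0 r),
    fun r => u r / w (τ0 r), ?_, ?_, ?_, ?_⟩
  · intro r
    have h1 := hune r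
    have h2 := hτ0 r
    have h3 := hwne (τ0 r)
    field_simp
  · intro i r
    rw [hAF, hFF', Matrix.mul_apply]
    rw [Finset.sum_eq_single_of_mem (τ0 r) (Finset.mem_univ _) ?sideA]
    case sideA =>
      intro t _ htne
      simp [hF', htne]
    · simp [hF', hτapp]
      ring
  · intro j r
    rw [hBG, Matrix.mul_apply]
    rw [Finset.sum_eq_single_of_mem (τ0 r) (Finset.mem_univ _) ?sideB]
    case sideB =>
      intro s _ hsne
      have hGH : G s r = H r s := rfl
      rw [hGH, hHent r s, if_neg hsne, mul_zero]
    · have hGH : G (τ0 r) r = H r (τ0 r) := rfl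
      rw [hGH, hτapp]
      ring
  · intro k r
    have h1 := hrel r (τ0 r) (hτ0 r) k
    have h3 := hwne (τ0 r)
    rw [hτapp]
    field_simp
    linear_combination h1

end Stmt0Aux

/-- If `A` and `B` have full column rank and `k_C ≥ 2`, then the rank of
`T = [A,B,C]_R` equals `R` and the CPD of `T` is unique. -/
theorem stmt0 {I J K R : ℕ} (A : Matrix (Fin I) (Fin R) ℝ) (B : Matrix (Fin J) (Fin R) ℝ)
    (C : Matrix (Fin K) (Fin R) ℝ)
    (hA : A.rank = R) (hB : B.rank = R) (hC : 2 ≤ kRank C) :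
    tensorRank (cpdTensor A B C) = R ∧ cpdUnique R (cpdTensor A B C) := by
  obtain ⟨hR2, hpair⟩ := Stmt0Aux.pair_li_of_kRank C hC
  have injB := Stmt0Aux.inj_of_rank B hB
  have cnz : ∀ r, ∃ k, C k r ≠ 0 := by
    intro r
    by_contra hcon
    push_neg at hcon
    obtain ⟨r', hr'⟩ := Fintype.exists_ne_of_one_lt_card (by simpa using (show 1 < R by omega)) r
    exact one_ne_zero (hpair r r' (Ne.symm hr') 1 0 (fun k => by rw [hcon k]; ring)).1
  have surj1 : Function.Surjective (Stmt0Aux.kr B C).mulVecLin :=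
    Stmt0Aux.surj_of_inj_transpose _ (Stmt0Aux.kr_transpose_inj B C injB cnz)
  have hrk : (Stmt0Aux.unf1 (cpdTensor A B C)).rank = R := Stmt0Aux.rank_unf1 A B C hA surj1
  constructor
  · apply le_antisymm
    · exact Nat.sInf_le ⟨A, B, C, rfl⟩
    · have hmem : R ∈ {n | ∃ A' B' C', cpdTensor A B C = cpdTensor (R := n) A' B' C'} :=
        ⟨A, B, C, rfl⟩
      apply le_csInf ⟨R, hmem⟩
      rintro n ⟨A'', B'', C'', hT⟩
      calc R = (Stmt0Aux.unf1 (cpdTensor A B C)).rank := hrk.symm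
        _ = (A'' * Stmt0Aux.kr B'' C'').rank := by rw [hT, Stmt0Aux.unf1_cpd]
        _ ≤ A''.rank := Matrix.rank_mul_le_left _ _
        _ ≤ n := by simpa using Matrix.rank_le_card_width A''
  · intro A₁ A₂ B₁ B₂ C₁ C₂ h₁ h₂
    obtain ⟨σ₁, la₁, lb₁, lc₁, hp₁, hA₁, hB₁, hC₁⟩ :=
      Stmt0Aux.key A B C hA hB hR2 hpair A₁ B₁ C₁ h₁
    obtain ⟨σ₂, la₂, lb₂, lc₂, hp₂, hA₂, hB₂, hC₂⟩ :=
      Stmt0Aux.key A B C hA hB hR2 hpair A₂ B₂ C₂ h₂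
    set σ : Equiv.Perm (Fin R) := σ₁⁻¹ * σ₂ with hσ
    have hap : ∀ r, σ₁ (σ r) = σ₂ r := by
      intro r
      simp [hσ, Equiv.Perm.mul_apply]
    have hne1 : ∀ r, la₁ r ≠ 0 ∧ lb₁ r ≠ 0 ∧ lc₁ r ≠ 0 := by
      intro r
      have h := hp₁ r
      refine ⟨?_, ?_, ?_⟩ <;> intro h0 <;> rw [h0] at h <;> simp at h
    have scalar : ∀ (X y₁ y₂ : ℝ), y₁ ≠ 0 → y₂ / y₁ * (y₁ * X) = y₂ * X := by
      intro X y₁ y₂ hy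
      field_simp
    refine ⟨σ, fun r => la₂ r / la₁ (σ r), fun r => lb₂ r / lb₁ (σ r),
      fun r => lc₂ r / lc₁ (σ r), ?_, ?_, ?_, ?_⟩
    · intro r
      obtain ⟨n1, n2, n3⟩ := hne1 (σ r)
      have e1 := hp₁ (σ r)
      have e2 := hp₂ r
      field_simp
      linear_combination e2 - e1
    · intro i r
      obtain ⟨n1, _, _⟩ := hne1 (σ r)
      have e1 := hA₁ i (σ r)
      rw [hap r] at e1
      rw [hA₂ i r, e1, scalar _ _ _ n1]
    · intro j r
      obtain ⟨_, n2, _⟩ := hne1 (σ r)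
      have e1 := hB₁ j (σ r)
      rw [hap r] at e1
      rw [hB₂ j r, e1, scalar _ _ _ n2]
    · intro k r
      obtain ⟨_, _, n3⟩ := hne1 (σ r)
      have e1 := hC₁ k (σ r)
      rw [hap r] at e1
      rw [hC₂ k r, e1, scalar _ _ _ n3]
end
end

section
/- Let C ∈ ℝ^{K×R} with K ≤ R, set m := R − K + 2, and suppose the k-rank of C satisfies k_C ≥ K − 1. Then the K^m × C(R,m) matrix R_m(C) has full column rank C(R,m). -/
open scoped BigOperators

noncomputable section

/-- The permanent of a square matrix. -/
def permanent {n : ℕ} (A : Matrix (Fin n) (Fin n) ℝ) : ℝ :=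
  ∑ σ : Equiv.Perm (Fin n), ∏ i, A i (σ i)

/-- The matrix `R_m(C)`: rows are indexed by tuples `(i_1,…,i_m) ∈ {1,…,K}^m`, columns by
`m`-element subsets `{j_1 < … < j_m}` of the columns of `C`, and the corresponding entry
is the permanent of the `m × m` submatrix of `C` on rows `i_1,…,i_m` and columns
`j_1,…,j_m`. -/
def Rmat {K R : ℕ} (m : ℕ) (C : Matrix (Fin K) (Fin R) ℝ) :
    Matrix (Fin m → Fin K) {t : Finset (Fin R) // t.card = m} ℝ :=
  Matrix.of fun i t =>
    permanent (Matrix.of fun a b : Fin m => C (i a) (t.1.orderIsoOfFin t.2 b : Fin R))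

open Matrix Finset

-- inverse of castSuccEmb on finsets avoiding `last`
lemma map_filter_castSucc {R' : ℕ} (tt : Finset (Fin (R'+1))) (hr : Fin.last R' ∉ tt) :
    (Finset.filter (fun j : Fin R' => Fin.castSucc j ∈ tt) Finset.univ).map Fin.castSuccEmb = tt := by
  ext x
  simp only [Finset.mem_map, Finset.mem_filter, Finset.mem_univ, true_and, Fin.castSuccEmb,
    Fin.castAddEmb, Function.Embedding.coeFn_mk, Fin.castAdd]
  constructor
  · rintro ⟨j, hj, rfl⟩; exact hj
  · intro hx
    have hxr : x ≠ Fin.last R' := fun h => hr (h ▸ hx)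
    exact ⟨x.castPred hxr, by rwa [Fin.castSucc_castPred], Fin.castSucc_castPred _ _⟩

lemma key : ∀ (R K m : ℕ) (v : Fin R → Fin K → ℝ),
    m + K = R + 2 →
    (∀ g : Fin R → ℝ, (Finset.univ.filter fun j => g j ≠ 0).card < K →
      (∑ j, g j • v j) = 0 → ∀ j, g j = 0) →
    ∀ lam : {t : Finset (Fin R) // t.card = m} → ℝ,
    (∀ x : Fin K → ℝ,
      ∑ t : {t : Finset (Fin R) // t.card = m}, lam t * ∏ j ∈ t.1, v j ⬝ᵥ x = 0) →
    ∀ t, lam t = 0 := by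
  intro R
  induction R using Nat.strong_induction_on with
  | _ R IH =>
  intro K m v hmK hind lam hsum t
  classical
  rcases Nat.eq_zero_or_pos m with hm0 | hm1
  · -- m = 0 case
    subst hm0
    have ht : t.1 = ∅ := Finset.card_eq_zero.mp t.2
    have hu : ∀ t' : {t : Finset (Fin R) // t.card = 0}, t' = t := fun t' =>
      Subtype.ext (by rw [Finset.card_eq_zero.mp t'.2, ht])
    have h0 := hsum 0
    rw [Finset.sum_eq_single t (fun b _ hb => absurd (hu b) hb)
      (fun h => absurd (Finset.mem_univ t) h)] at h0
    rw [ht] at h0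
    simpa using h0
  · -- m ≥ 1
    have hmR : m ≤ R := by
      have := Finset.card_le_univ t.1
      rw [t.2] at this
      simpa using this
    obtain ⟨R', rfl⟩ : ∃ R'', R = R'' + 1 := ⟨R - 1, by omega⟩
    obtain ⟨K'', rfl⟩ : ∃ k, K = k + 2 := ⟨K - 2, by omega⟩
    set r : Fin (R'+1) := Fin.last R' with hrdef
    -- v r ≠ 0
    have hvr : v r ≠ 0 := by
      intro hvr0
      have h1 := hind (fun j => if j = r then 1 else 0) ?_ ?_ r
      · simp at h1
      · have : (Finset.univ.filter fun j : Fin (R'+1) =>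
            (if j = r then (1:ℝ) else 0) ≠ 0) = {r} := by
          ext j; by_cases h : j = r <;> simp [h]
        rw [this]; simp
      · simp [ite_smul, hvr0]
    -- Euclidean space setup
    set U : Submodule ℝ (EuclideanSpace ℝ (Fin (K''+2))) :=
      (ℝ ∙ (WithLp.toLp 2 (v r) : EuclideanSpace ℝ (Fin (K''+2))))ᗮ with hU
    haveI : Fact (Module.finrank ℝ (EuclideanSpace ℝ (Fin (K''+2))) = (K''+1)+1) :=
      ⟨by simp [finrank_euclideanSpace]⟩
    have hUrank : Module.finrank ℝ U = K''+1 := Submodule.finrank_orthogonal_span_singleton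
      (fun h => hvr (congrArg WithLp.ofLp h))
    set b : Module.Basis (Fin (K''+1)) ℝ U := Module.finBasisOfFinrankEq ℝ U hUrank with hb
    -- inner product vs dotProduct
    have hinner : ∀ x y : EuclideanSpace ℝ (Fin (K''+2)),
        (inner ℝ x y : ℝ) = (x : Fin (K''+2) → ℝ) ⬝ᵥ (y : Fin (K''+2) → ℝ) := by
      intro x y; simp [PiLp.inner_apply, dotProduct, RCLike.inner_apply, mul_comm]
    set bb : Fin (K''+1) → (Fin (K''+2) → ℝ) :=
      fun i => ((b i : EuclideanSpace ℝ (Fin (K''+2))) : Fin (K''+2) → ℝ) with hbbdef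
    have hbU : ∀ i, v r ⬝ᵥ bb i = 0 := by
      intro i
      have h1 := (Submodule.mem_orthogonal _ _).mp (b i).2 (WithLp.toLp 2 (v r))
        (Submodule.mem_span_singleton_self _)
      rwa [hinner] at h1
    -- pairing with ψ y := ∑ i, y i • b i
    have hψpair : ∀ (u : Fin (K''+2) → ℝ) (y : Fin (K''+1) → ℝ),
        u ⬝ᵥ (∑ i, y i • bb i)
          = ∑ i, (u ⬝ᵥ bb i) * y i := by
      intro u y
      simp only [dotProduct, Finset.sum_apply, Pi.smul_apply, smul_eq_mul,
        Finset.mul_sum]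
      rw [Finset.sum_comm]
      refine Finset.sum_congr rfl fun i _ => ?_
      rw [Finset.sum_mul]
      exact Finset.sum_congr rfl fun k _ => by ring
    -- span of bb is U
    have hUspan : Submodule.span ℝ
        (Set.range (fun i => ((b i : EuclideanSpace ℝ (Fin (K''+2)))))) = U := by
      have h1 := congrArg (Submodule.map U.subtype) b.span_eq
      rwa [Submodule.map_span, Submodule.map_top, Submodule.range_subtype,
        ← Set.range_comp] at h1
    -- the projected vectors
    set w : Fin R' → Fin (K''+1) → ℝ :=
      fun j i => v (Fin.castSucc j) ⬝ᵥ bb i with hw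
    -- independence transfer
    have hindw : ∀ g : Fin R' → ℝ, (Finset.univ.filter fun j => g j ≠ 0).card < K''+1 →
        (∑ j, g j • w j) = 0 → ∀ j, g j = 0 := by
      intro g hg hsum0 j
      set u : Fin (K''+2) → ℝ := ∑ j, g j • v (Fin.castSucc j) with hu
      have hub : ∀ i, u ⬝ᵥ bb i = 0 := by
        intro i
        have h1 : (∑ j, g j • w j) i = 0 := by rw [hsum0]; rfl
        simp only [Finset.sum_apply, Pi.smul_apply, smul_eq_mul, hw] at h1
        rw [hu]
        simp only [dotProduct, Finset.sum_apply, Pi.smul_apply, smul_eq_mul,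
          Finset.sum_mul]
        rw [Finset.sum_comm]
        rw [← h1]
        exact Finset.sum_congr rfl fun j _ => by
          simp only [dotProduct, Finset.mul_sum]
          exact Finset.sum_congr rfl fun k _ => by ring
      have huU : WithLp.toLp 2 u ∈ Uᗮ := by
        have horth : U ⟂ (ℝ ∙ (WithLp.toLp 2 u : EuclideanSpace ℝ (Fin (K''+2)))) := by
          rw [← hUspan, Submodule.isOrtho_span]
          rintro z ⟨i, rfl⟩ y hy
          rw [Set.mem_singleton_iff] at hy
          subst hy
          rw [hinner, dotProduct_comm]
          exact hub i
        exact horth.symm (Submodule.mem_span_singleton_self _)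
      rw [hU, Submodule.orthogonal_orthogonal] at huU
      obtain ⟨c, hc⟩ := Submodule.mem_span_singleton.mp huU
      -- build extended coefficient function
      set G : Fin (R'+1) → ℝ :=
        fun jj => if h : jj = r then -c else g (jj.castPred h) with hG
      have hGcs : ∀ j : Fin R', G (Fin.castSucc j) = g j := by
        intro j
        rw [hG]; simp only []
        rw [dif_neg (Fin.castSucc_lt_last j).ne, Fin.castPred_castSucc]
      have hGcard : (Finset.univ.filter fun j => G j ≠ 0).card < K''+2 := by
        have hsub : (Finset.univ.filter fun j => G j ≠ 0) ⊆
            insert r ((Finset.univ.filter fun j => g j ≠ 0).map Fin.castSuccEmb) := by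
          intro jj hjj
          rw [Finset.mem_filter] at hjj
          by_cases h : jj = r
          · rw [h]; exact Finset.mem_insert_self _ _
          · refine Finset.mem_insert_of_mem ?_
            rw [Finset.mem_map]
            refine ⟨jj.castPred h, ?_, Fin.castSucc_castPred jj h⟩
            rw [Finset.mem_filter]
            refine ⟨Finset.mem_univ _, ?_⟩
            have := hjj.2
            rw [hG] at this; simp only [] at this
            rwa [dif_neg h] at this
        calc (Finset.univ.filter fun j => G j ≠ 0).card
            ≤ (insert r ((Finset.univ.filter fun j => g j ≠ 0).map Fin.castSuccEmb)).card :=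
              Finset.card_le_card hsub
          _ ≤ ((Finset.univ.filter fun j => g j ≠ 0).map Fin.castSuccEmb).card + 1 :=
              Finset.card_insert_le _ _
          _ = (Finset.univ.filter fun j => g j ≠ 0).card + 1 := by rw [Finset.card_map]
          _ < K''+2 := by omega
      have hGsum : (∑ jj, G jj • v jj) = 0 := by
        rw [Fin.sum_univ_castSucc]
        have h2 : ∀ j : Fin R', G (Fin.castSucc j) • v (Fin.castSucc j)
            = g j • v (Fin.castSucc j) := fun j => by rw [hGcs j]
        rw [Finset.sum_congr rfl fun j _ => h2 j]
        have h3 : G r = -c := by rw [hG]; exact dif_pos rfl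
        have hc' : c • v r = u := congrArg WithLp.ofLp hc
        rw [h3, ← hu, ← hc']
        simp [← add_smul, hrdef]
      have := hind G hGcard hGsum
      rw [← hGcs j]
      exact this _
    -- Step A : lam vanishes off r
    set inv : Finset (Fin (R'+1)) → Finset (Fin R') :=
      fun tt => Finset.filter (fun j : Fin R' => Fin.castSucc j ∈ tt) Finset.univ with hinvdef
    have hinv : ∀ tt : Finset (Fin (R'+1)), r ∉ tt → (inv tt).map Fin.castSuccEmb = tt :=
      fun tt hr => map_filter_castSucc tt hr
    have hrnotmap : ∀ s : Finset (Fin R'), r ∉ s.map Fin.castSuccEmb := by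
      intro s hmem
      rw [Finset.mem_map] at hmem
      obtain ⟨j, _, hj⟩ := hmem
      exact (Fin.castSucc_lt_last j).ne (by exact hj)
    set lamNot : {s : Finset (Fin R') // s.card = m} → ℝ :=
      fun s => lam ⟨s.1.map Fin.castSuccEmb, by rw [Finset.card_map]; exact s.2⟩ with hlamNot
    have hAraw : ∀ x : Fin (K''+2) → ℝ, v r ⬝ᵥ x = 0 →
        ∑ s : {s : Finset (Fin R') // s.card = m},
          lamNot s * ∏ j ∈ s.1, v (Fin.castSucc j) ⬝ᵥ x = 0 := by
      intro x hx
      have h0 := hsum x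
      rw [← Finset.sum_filter_add_sum_filter_not Finset.univ
        (fun t : {t : Finset (Fin (R'+1)) // t.card = m} => r ∈ t.1)] at h0
      have h1 : ∑ tt ∈ Finset.univ.filter
          (fun t : {t : Finset (Fin (R'+1)) // t.card = m} => r ∈ t.1),
          lam tt * ∏ j ∈ tt.1, v j ⬝ᵥ x = 0 := by
        refine Finset.sum_eq_zero fun tt htt => ?_
        rw [Finset.prod_eq_zero (Finset.mem_filter.mp htt).2 hx, mul_zero]
      rw [h1, zero_add] at h0
      rw [← h0]
      refine Finset.sum_bij (i := fun (s : {s : Finset (Fin R') // s.card = m}) _ =>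
        (⟨s.1.map Fin.castSuccEmb, by rw [Finset.card_map]; exact s.2⟩ :
          {t : Finset (Fin (R'+1)) // t.card = m})) ?_ ?_ ?_ ?_
      · intro s _
        rw [Finset.mem_filter]
        exact ⟨Finset.mem_univ _, hrnotmap _⟩
      · intro s1 _ s2 _ hval
        have h2 := congrArg Subtype.val hval
        exact Subtype.ext (Finset.map_injective Fin.castSuccEmb h2)
      · intro tt htt
        have hrt : r ∉ tt.1 := (Finset.mem_filter.mp htt).2
        have hcard : (inv tt.1).card = m := by
          rw [← Finset.card_map (f := Fin.castSuccEmb), hinv tt.1 hrt]; exact tt.2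
        exact ⟨⟨inv tt.1, hcard⟩, Finset.mem_univ _, Subtype.ext (hinv tt.1 hrt)⟩
      · intro s _
        rw [Finset.prod_map]
        rfl
    have hsumw : ∀ y : Fin (K''+1) → ℝ,
        ∑ s : {s : Finset (Fin R') // s.card = m},
          lamNot s * ∏ j ∈ s.1, w j ⬝ᵥ y = 0 := by
      intro y
      set x : Fin (K''+2) → ℝ := ∑ i, y i • bb i with hx
      have hxU : v r ⬝ᵥ x = 0 := by
        rw [hx, hψpair]
        exact Finset.sum_eq_zero fun i _ => by rw [hbU i, zero_mul]
      have h4 : ∀ j : Fin R', w j ⬝ᵥ y = v (Fin.castSucc j) ⬝ᵥ x := by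
        intro j
        rw [hx, hψpair]
        simp only [hw, dotProduct]
      have h5 := hAraw x hxU
      rw [← h5]
      exact Finset.sum_congr rfl fun s _ => by
        rw [Finset.prod_congr rfl fun j _ => h4 j]
    have hA : ∀ s : {s : Finset (Fin R') // s.card = m}, lamNot s = 0 :=
      IH R' (by omega) (K''+1) m w (by omega) hindw lamNot hsumw
    have hlam0 : ∀ tt : {t : Finset (Fin (R'+1)) // t.card = m}, r ∉ tt.1 → lam tt = 0 := by
      intro tt hr
      have hcard : (inv tt.1).card = m := by
        rw [← Finset.card_map (f := Fin.castSuccEmb), hinv tt.1 hr]; exact tt.2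
      have h1 := hA ⟨inv tt.1, hcard⟩
      rw [hlamNot] at h1
      simp only [] at h1
      rwa [show (⟨(inv tt.1).map Fin.castSuccEmb, _⟩ : {t : Finset (Fin (R'+1)) // t.card = m})
        = tt from Subtype.ext (hinv tt.1 hr)] at h1
    -- Step B
    obtain ⟨m'', rfl⟩ : ∃ m'', m = m'' + 1 := ⟨m - 1, by omega⟩
    have hinscard : ∀ s : {s : Finset (Fin R') // s.card = m''},
        (insert r (s.1.map Fin.castSuccEmb)).card = m'' + 1 := by
      intro s
      rw [Finset.card_insert_of_notMem (hrnotmap s.1), Finset.card_map, s.2]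
    set lamIns : {s : Finset (Fin R') // s.card = m''} → ℝ :=
      fun s => lam ⟨insert r (s.1.map Fin.castSuccEmb), hinscard s⟩ with hlamIns
    have hfact : ∀ x : Fin (K''+2) → ℝ,
        (v r ⬝ᵥ x) * (∑ s : {s : Finset (Fin R') // s.card = m''},
          lamIns s * ∏ j ∈ s.1, v (Fin.castSucc j) ⬝ᵥ x) = 0 := by
      intro x
      have h0 := hsum x
      rw [← Finset.sum_filter_add_sum_filter_not Finset.univ
        (fun t : {t : Finset (Fin (R'+1)) // t.card = m''+1} => r ∈ t.1)] at h0
      have h2 : ∑ tt ∈ Finset.univ.filter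
          (fun t : {t : Finset (Fin (R'+1)) // t.card = m''+1} => ¬ r ∈ t.1),
          lam tt * ∏ j ∈ tt.1, v j ⬝ᵥ x = 0 :=
        Finset.sum_eq_zero fun tt htt => by
          rw [hlam0 tt (Finset.mem_filter.mp htt).2, zero_mul]
      have h1 : ∑ s : {s : Finset (Fin R') // s.card = m''},
            lamIns s * ((v r ⬝ᵥ x) * ∏ j ∈ s.1, v (Fin.castSucc j) ⬝ᵥ x)
          = ∑ tt ∈ Finset.univ.filter
            (fun t : {t : Finset (Fin (R'+1)) // t.card = m''+1} => r ∈ t.1),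
            lam tt * ∏ j ∈ tt.1, v j ⬝ᵥ x := by
        refine Finset.sum_bij (i := fun (s : {s : Finset (Fin R') // s.card = m''}) _ =>
          (⟨insert r (s.1.map Fin.castSuccEmb), hinscard s⟩ :
            {t : Finset (Fin (R'+1)) // t.card = m''+1})) ?_ ?_ ?_ ?_
        · intro s _
          rw [Finset.mem_filter]
          exact ⟨Finset.mem_univ _, Finset.mem_insert_self _ _⟩
        · intro s1 _ s2 _ hval
          have h3 := congrArg Subtype.val hval
          simp only [] at h3
          have h4 : s1.1.map Fin.castSuccEmb = s2.1.map Fin.castSuccEmb := by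
            have e1 := Finset.erase_insert (hrnotmap s1.1)
            have e2 := Finset.erase_insert (hrnotmap s2.1)
            rw [← e1, ← e2, h3]
          exact Subtype.ext (Finset.map_injective Fin.castSuccEmb h4)
        · intro tt htt
          have hrt : r ∈ tt.1 := (Finset.mem_filter.mp htt).2
          have hre : r ∉ tt.1.erase r := Finset.notMem_erase _ _
          have hcard : (inv (tt.1.erase r)).card = m'' := by
            have h5 : (tt.1.erase r).card = m'' := by
              rw [Finset.card_erase_of_mem hrt, tt.2]; omega
            rw [← Finset.card_map (f := Fin.castSuccEmb), hinv _ hre, h5]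
          refine ⟨⟨inv (tt.1.erase r), hcard⟩, Finset.mem_univ _, Subtype.ext ?_⟩
          simp only []
          rw [hinv _ hre, Finset.insert_erase hrt]
        · intro s _
          rw [Finset.prod_insert (hrnotmap s.1), Finset.prod_map]
          rfl
      rw [← h1, h2, add_zero] at h0
      rw [Finset.mul_sum, ← h0]
      exact Finset.sum_congr rfl fun s _ => by ring
    -- remove the linear factor by continuity
    have hGzero : ∀ x : Fin (K''+2) → ℝ,
        ∑ s : {s : Finset (Fin R') // s.card = m''},
          lamIns s * ∏ j ∈ s.1, v (Fin.castSucc j) ⬝ᵥ x = 0 := by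
      have hcont : Continuous (fun x : Fin (K''+2) → ℝ =>
          ∑ s : {s : Finset (Fin R') // s.card = m''},
            lamIns s * ∏ j ∈ s.1, v (Fin.castSucc j) ⬝ᵥ x) := by
        refine continuous_finset_sum _ fun s _ => Continuous.mul continuous_const ?_
        refine continuous_finset_prod _ fun j _ => ?_
        show Continuous fun x : Fin (K''+2) → ℝ => ∑ k, v (Fin.castSucc j) k * x k
        exact continuous_finset_sum _ fun k _ =>
          Continuous.mul continuous_const (continuous_apply k)
      intro x
      have hd : v r ⬝ᵥ v r ≠ 0 := fun h => hvr (dotProduct_self_eq_zero.mp h)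
      set e0 : ℝ := -(v r ⬝ᵥ x) / (v r ⬝ᵥ v r) with he0
      have key2 : Set.EqOn (fun ε : ℝ =>
          ∑ s : {s : Finset (Fin R') // s.card = m''},
            lamIns s * ∏ j ∈ s.1, v (Fin.castSucc j) ⬝ᵥ (x + ε • v r))
          (fun _ => (0:ℝ)) {e0}ᶜ := by
        intro ε hε
        have h4 : v r ⬝ᵥ (x + ε • v r) ≠ 0 := by
          rw [dotProduct_add, dotProduct_smul, smul_eq_mul]
          intro hcon
          apply hε
          rw [Set.mem_singleton_iff, he0]
          field_simp
          linarith [hcon]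
        have h5 := hfact (x + ε • v r)
        exact (mul_eq_zero.mp h5).resolve_left h4
      have h6 : (fun ε : ℝ =>
          ∑ s : {s : Finset (Fin R') // s.card = m''},
            lamIns s * ∏ j ∈ s.1, v (Fin.castSucc j) ⬝ᵥ (x + ε • v r))
          = fun _ => (0:ℝ) :=
        Continuous.ext_on (dense_compl_singleton e0)
          (hcont.comp (continuous_const.add (continuous_id.smul continuous_const))) continuous_const key2
      have h7 := congrFun h6 0
      simpa using h7
    -- independence transfer for the castSucc family
    have hindcs : ∀ g : Fin R' → ℝ, (Finset.univ.filter fun j => g j ≠ 0).card < K''+2 →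
        (∑ j, g j • v (Fin.castSucc j)) = 0 → ∀ j, g j = 0 := by
      intro g hg hs j
      set G2 : Fin (R'+1) → ℝ := fun jj => if h : jj = r then 0 else g (jj.castPred h) with hG2
      have hG2cs : ∀ j : Fin R', G2 (Fin.castSucc j) = g j := by
        intro j; rw [hG2]; simp only []
        rw [dif_neg (Fin.castSucc_lt_last j).ne, Fin.castPred_castSucc]
      have hcard : (Finset.univ.filter fun jj => G2 jj ≠ 0).card < K''+2 := by
        have hsub : (Finset.univ.filter fun jj => G2 jj ≠ 0) ⊆
            (Finset.univ.filter fun j => g j ≠ 0).map Fin.castSuccEmb := by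
          intro jj hjj
          rw [Finset.mem_filter] at hjj
          by_cases h : jj = r
          · exfalso; apply hjj.2; rw [h, hG2]; exact dif_pos rfl
          · rw [Finset.mem_map]
            refine ⟨jj.castPred h, ?_, Fin.castSucc_castPred jj h⟩
            rw [Finset.mem_filter]
            refine ⟨Finset.mem_univ _, ?_⟩
            have h8 := hjj.2
            rw [hG2] at h8; simp only [] at h8
            rwa [dif_neg h] at h8
        calc (Finset.univ.filter fun jj => G2 jj ≠ 0).card
            ≤ ((Finset.univ.filter fun j => g j ≠ 0).map Fin.castSuccEmb).card :=
              Finset.card_le_card hsub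
          _ = (Finset.univ.filter fun j => g j ≠ 0).card := Finset.card_map _
          _ < K''+2 := hg
      have hsum2 : (∑ jj, G2 jj • v jj) = 0 := by
        rw [Fin.sum_univ_castSucc]
        rw [Finset.sum_congr rfl fun j (_ : j ∈ Finset.univ) => by rw [hG2cs j]]
        have h9 : G2 (Fin.last R') = 0 := by rw [hG2]; exact dif_pos rfl
        rw [h9, zero_smul, add_zero]
        exact hs
      have h10 := hind G2 hcard hsum2
      rw [← hG2cs j]; exact h10 _
    have hB : ∀ s : {s : Finset (Fin R') // s.card = m''}, lamIns s = 0 :=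
      IH R' (by omega) (K''+2) m'' (fun j => v (Fin.castSucc j)) (by omega) hindcs lamIns hGzero
    -- conclude
    by_cases hr : r ∈ t.1
    · have hre : r ∉ t.1.erase r := Finset.notMem_erase _ _
      have hc1 : (t.1.erase r).card = m'' := by rw [Finset.card_erase_of_mem hr, t.2]; omega
      have hcard : (inv (t.1.erase r)).card = m'' := by
        rw [← Finset.card_map (f := Fin.castSuccEmb), hinv _ hre, hc1]
      have h1 := hB ⟨inv (t.1.erase r), hcard⟩
      rw [hlamIns] at h1
      simp only [] at h1
      have h2 : (⟨insert r ((inv (t.1.erase r)).map Fin.castSuccEmb),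
          hinscard ⟨inv (t.1.erase r), hcard⟩⟩ :
            {t : Finset (Fin (R'+1)) // t.card = m''+1}) = t :=
        Subtype.ext (by simp only []; rw [hinv _ hre, Finset.insert_erase hr])
      rwa [h2] at h1
    · exact hlam0 t hr


/-- If `K ≤ R`, `m := R − K + 2` and `k_C ≥ K − 1`, then the
`K^m × C(R,m)` matrix `R_m(C)` has full column rank `C(R,m)`. -/
theorem stmt12 {K R m : ℕ} (C : Matrix (Fin K) (Fin R) ℝ) (hKR : K ≤ R)
    (hm : m = R - K + 2) (hC : K - 1 ≤ kRank C) :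
    (Rmat m C).rank = Nat.choose R m := by
  classical
  -- kRank membership
  have hmem : kRank C ∈ {k | k ≤ Fintype.card (Fin R) ∧
      ∀ s : Finset (Fin R), s.card = k →
        LinearIndependent ℝ fun j : s => fun i : Fin K => C i j.1} := by
    apply Nat.sSup_mem
    · refine ⟨0, ?_, ?_⟩
      · omega
      · intro s hs
        have : s = ∅ := Finset.card_eq_zero.mp hs
        subst this
        haveI : IsEmpty ((∅ : Finset (Fin R)) : Type) := by
          constructor; rintro ⟨x, hx⟩; exact absurd hx (Finset.notMem_empty x)
        exact linearIndependent_empty_type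
    · exact ⟨Fintype.card (Fin R), fun k hk => hk.1⟩
  -- full independence transfer
  have hind : ∀ g : Fin R → ℝ, (Finset.univ.filter fun j => g j ≠ 0).card < K →
      (∑ j, g j • (fun i => C i j)) = 0 → ∀ j, g j = 0 := by
    intro g hg hsum j
    by_cases hj : g j = 0
    · exact hj
    have hjs : j ∈ Finset.univ.filter fun j => g j ≠ 0 := by
      rw [Finset.mem_filter]; exact ⟨Finset.mem_univ _, hj⟩
    have hcard : (Finset.univ.filter fun j => g j ≠ 0).card ≤ kRank C := by omega
    obtain ⟨s', hss', _, hcard'⟩ := Finset.exists_subsuperset_card_eq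
      (Finset.subset_univ (Finset.univ.filter fun j => g j ≠ 0)) hcard
      (by rw [Finset.card_univ]; exact hmem.1)
    have hli := hmem.2 s' hcard'
    rw [Fintype.linearIndependent_iff] at hli
    have h0 : (∑ jj : s', g jj.1 • (fun i => C i jj.1)) = 0 := by
      rw [Finset.univ_eq_attach, Finset.sum_attach s' (fun jj => g jj • (fun i => C i jj))]
      rw [Finset.sum_subset (Finset.subset_univ s') ?_]
      · exact hsum
      · intro x _ hx
        have : g x = 0 := by
          by_contra hgx
          exact hx (hss' (by rw [Finset.mem_filter]; exact ⟨Finset.mem_univ _, hgx⟩))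
        rw [this, zero_smul]
    exact absurd (hli (fun jj => g jj.1) h0 ⟨j, hss' hjs⟩) hj
  -- pairing identity
  have hpair : ∀ (x : Fin K → ℝ) (t : {t : Finset (Fin R) // t.card = m}),
      ∑ i : Fin m → Fin K, (∏ a, x (i a)) * Rmat m C i t
        = (m.factorial : ℝ) * ∏ j ∈ t.1, (fun i => C i j) ⬝ᵥ x := by
    intro x t
    simp only [Rmat, Matrix.of_apply, _root_.permanent, Finset.mul_sum]
    rw [Finset.sum_comm]
    set e : Fin m → Fin R := fun b => (t.1.orderIsoOfFin t.2 b : Fin R) with he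
    have h1 : ∀ σ : Equiv.Perm (Fin m),
        ∑ i : Fin m → Fin K, (∏ a, x (i a)) * ∏ a, C (i a) (e (σ a))
          = ∏ j ∈ t.1, (fun i => C i j) ⬝ᵥ x := by
      intro σ
      have h2 : ∀ i : Fin m → Fin K,
          (∏ a, x (i a)) * ∏ a, C (i a) (e (σ a))
            = ∏ a, (x (i a) * C (i a) (e (σ a))) := by
        intro i; rw [Finset.prod_mul_distrib]
      rw [Finset.sum_congr rfl fun i _ => h2 i]
      rw [← Fintype.piFinset_univ,
        ← Finset.prod_univ_sum (fun _ : Fin m => (Finset.univ : Finset (Fin K)))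
          (fun a k => x k * C k (e (σ a)))]
      have h3 : ∀ a : Fin m, (∑ k : Fin K, x k * C k (e (σ a)))
          = (fun i => C i (e (σ a))) ⬝ᵥ x := by
        intro a; simp [dotProduct, mul_comm]
      rw [Finset.prod_congr rfl fun a _ => h3 a]
      rw [Equiv.prod_comp σ (fun a => (fun i => C i (e a)) ⬝ᵥ x)]
      rw [← Finset.prod_coe_sort t.1 (fun j => (fun i => C i j) ⬝ᵥ x)]
      exact Equiv.prod_comp (t.1.orderIsoOfFin t.2).toEquiv
        (fun j => (fun i => C i (j : Fin R)) ⬝ᵥ x)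
    rw [Finset.sum_congr rfl fun σ _ => h1 σ, Finset.sum_const, Finset.card_univ,
      Fintype.card_perm, Fintype.card_fin, nsmul_eq_mul]
  -- column independence via the key lemma
  have hm' : m + K = R + 2 := by omega
  have hcols : ∀ g : {t : Finset (Fin R) // t.card = m} → ℝ,
      (∑ tt, g tt • (fun i : Fin m → Fin K => Rmat m C i tt)) = 0 → ∀ tt, g tt = 0 := by
    intro g hg tt
    have hfac : (m.factorial : ℝ) ≠ 0 := Nat.cast_ne_zero.mpr (Nat.factorial_ne_zero m)
    have hkey := key R K m (fun j i => C i j) hm' hind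
      (fun tt => (m.factorial : ℝ) * g tt) ?_ tt
    · rcases mul_eq_zero.mp hkey with h | h
      · exact absurd h hfac
      · exact h
    · intro x
      calc ∑ tt : {t : Finset (Fin R) // t.card = m},
            ((m.factorial : ℝ) * g tt) * ∏ j ∈ tt.1, (fun i => C i j) ⬝ᵥ x
          = ∑ tt : {t : Finset (Fin R) // t.card = m},
            g tt * ((m.factorial : ℝ) * ∏ j ∈ tt.1, (fun i => C i j) ⬝ᵥ x) :=
            Finset.sum_congr rfl fun tt _ => by ring
        _ = ∑ tt : {t : Finset (Fin R) // t.card = m},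
            g tt * (∑ i : Fin m → Fin K, (∏ a, x (i a)) * Rmat m C i tt) :=
            Finset.sum_congr rfl fun tt _ => by rw [hpair x tt]
        _ = ∑ tt : {t : Finset (Fin R) // t.card = m},
            ∑ i : Fin m → Fin K, g tt * ((∏ a, x (i a)) * Rmat m C i tt) :=
            Finset.sum_congr rfl fun tt _ => Finset.mul_sum _ _ _
        _ = ∑ i : Fin m → Fin K, ∑ tt : {t : Finset (Fin R) // t.card = m},
            g tt * ((∏ a, x (i a)) * Rmat m C i tt) := Finset.sum_comm
        _ = ∑ i : Fin m → Fin K, (∏ a, x (i a)) *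
            ∑ tt : {t : Finset (Fin R) // t.card = m}, g tt * Rmat m C i tt := by
            refine Finset.sum_congr rfl fun i _ => ?_
            rw [Finset.mul_sum]
            exact Finset.sum_congr rfl fun tt _ => by ring
        _ = 0 := by
            refine Finset.sum_eq_zero fun i _ => ?_
            have h5 : (∑ tt : {t : Finset (Fin R) // t.card = m},
                g tt • (fun i : Fin m → Fin K => Rmat m C i tt)) i = 0 := by rw [hg]; rfl
            simp only [Finset.sum_apply, Pi.smul_apply, smul_eq_mul] at h5
            rw [h5, mul_zero]
  -- rank computation
  have hinj : Function.Injective (Rmat m C).mulVecLin := by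
    rw [← LinearMap.ker_eq_bot, LinearMap.ker_eq_bot']
    intro g hg0
    funext tt
    refine hcols g ?_ tt
    funext i
    have h6 := congrFun hg0 i
    simp only [Matrix.mulVecLin_apply, Matrix.mulVec, dotProduct,
      Pi.zero_apply] at h6
    simp only [Finset.sum_apply, Pi.smul_apply, smul_eq_mul, Pi.zero_apply]
    rw [← h6]
    exact Finset.sum_congr rfl fun tt _ => mul_comm _ _
  have hdef : (Rmat m C).rank = Module.finrank ℝ (LinearMap.range (Rmat m C).mulVecLin) := rfl
  rw [hdef, LinearMap.finrank_range_of_inj hinj, Module.finrank_fintype_fun_eq_card,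
    Fintype.card_finset_len, Fintype.card_fin]
end
end

section
/- Let C ∈ ℝ^{K×R} have k-rank k := k_C ≥ 1. Then the set {X ∈ ℝ^{k×K} : k_{XC} < k} has Lebesgue measure zero in ℝ^{k×K} ≅ ℝ^{kK}; consequently, for almost every X ∈ ℝ^{k×K} the k-rank of the k×R matrix XC equals k_C. -/
open scoped BigOperators
open MeasureTheory

noncomputable section

section Aux

open Polynomial

variable {α β : Type*} [Fintype α] [Fintype β]

set_option linter.unusedSectionVars false

lemma kRank_zero_mem (A : Matrix α β ℝ) : 0 ∈ {k | k ≤ Fintype.card β ∧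
    ∀ s : Finset β, s.card = k → LinearIndependent ℝ fun j : s => fun i : α => A i j.1} := by
  refine ⟨Nat.zero_le _, fun s hs => ?_⟩
  rw [Finset.card_eq_zero] at hs
  subst hs
  have : IsEmpty ((∅ : Finset β) : Type _) := by simp; exact ⟨fun x => x.2⟩
  exact linearIndependent_empty_type

lemma kRank_bdd (A : Matrix α β ℝ) : BddAbove {k | k ≤ Fintype.card β ∧
    ∀ s : Finset β, s.card = k → LinearIndependent ℝ fun j : s => fun i : α => A i j.1} :=
  ⟨Fintype.card β, fun _ hx => hx.1⟩

lemma kRank_spec (A : Matrix α β ℝ) : kRank A ≤ Fintype.card β ∧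
    ∀ s : Finset β, s.card = kRank A → LinearIndependent ℝ fun j : s => fun i : α => A i j.1 :=
  Nat.sSup_mem ⟨0, kRank_zero_mem A⟩ (kRank_bdd A)

lemma le_kRank {A : Matrix α β ℝ} {m : ℕ} (h1 : m ≤ Fintype.card β)
    (h2 : ∀ s : Finset β, s.card = m → LinearIndependent ℝ fun j : s => fun i : α => A i j.1) :
    m ≤ kRank A :=
  le_csSup (kRank_bdd A) ⟨h1, h2⟩

/-- If a matrix `X * C` has linearly independent columns on some set, then so does `C`;
hence `kRank (X * C) ≤ kRank C`. -/
lemma kRank_mul_le {γ : Type*} [Fintype γ] (X : Matrix α γ ℝ) (C : Matrix γ β ℝ) :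
    kRank (X * C) ≤ kRank C := by
  obtain ⟨h1, h2⟩ := kRank_spec (X * C)
  apply le_kRank h1
  intro s hs
  have hli := h2 s hs
  apply LinearIndependent.of_comp (Matrix.mulVecLin X)
  have heq : (⇑(Matrix.mulVecLin X) ∘ fun j : s => fun l : γ => C l j.1)
      = fun j : s => fun i : α => (X * C) i j.1 := by
    funext j
    ext i
    simp [Matrix.mulVec, dotProduct, Matrix.mul_apply]
  rw [heq]
  exact hli

lemma eval_charpoly_neg {k : ℕ} (A : Matrix (Fin k) (Fin k) ℝ) (t : ℝ) :
    ((-A).charpoly).eval t = (A + t • 1).det := by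
  rw [Matrix.charpoly, ← coe_evalRingHom, RingHom.map_det]
  congr 1
  ext i j
  by_cases h : i = j
  · subst h
    simp [Matrix.charmatrix_apply_eq, Matrix.one_apply, add_comm]
  · simp [Matrix.charmatrix_apply_ne _ _ _ h, Matrix.one_apply, h]

lemma finite_det_add_smul_one {k : ℕ} (A : Matrix (Fin k) (Fin k) ℝ) :
    {t : ℝ | (A + t • 1).det = 0}.Finite := by
  apply Set.Finite.subset (Polynomial.finite_setOf_isRoot ((-A).charpoly_monic.ne_zero))
  intro t ht
  simp only [Set.mem_setOf_eq, IsRoot.def] at *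
  rw [eval_charpoly_neg]
  exact ht

/-- Almost every square matrix has nonzero determinant. -/
lemma ae_det_ne_zero {k : ℕ} :
    ∀ᵐ M : Fin k → Fin k → ℝ ∂volume, (Matrix.of M).det ≠ 0 := by
  have hmeas : MeasurableSet {M : Fin k → Fin k → ℝ | (Matrix.of M).det ≠ 0} := by
    have hc : Continuous fun M : Fin k → Fin k → ℝ => (Matrix.of M).det :=
      Continuous.matrix_det continuous_id
    exact (hc.measurable (measurableSet_singleton 0)).compl
  have := (MeasureTheory.ae_ae_add_linearMap_mem_iff
    (L := LinearMap.toSpanSingleton ℝ (Fin k → Fin k → ℝ) (Matrix.of.symm 1))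
    (μ := (volume : Measure ℝ)) (ν := (volume : Measure (Fin k → Fin k → ℝ))) hmeas).mp ?_
  · exact this
  · apply ae_of_all
    intro y
    have hfin := finite_det_add_smul_one (Matrix.of y)
    rw [ae_iff]
    apply measure_mono_null _ (hfin.measure_zero volume)
    intro t ht
    simp only [Set.mem_setOf_eq, not_not] at ht ⊢
    exact ht

/-- If the columns of `D` are linearly independent, then `X ↦ X * D` is surjective. -/
lemma surjective_mul_right {K k : ℕ} (D : Matrix (Fin K) (Fin k) ℝ)
    (hli : LinearIndependent ℝ fun a : Fin k => fun l => D l a) :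
    Function.Surjective fun X : Fin k → Fin K → ℝ =>
      ((Matrix.of X * D : Matrix (Fin k) (Fin k) ℝ) : Fin k → Fin k → ℝ) := by
  have hker : LinearMap.ker (Matrix.toLin' D) = ⊥ := by
    rw [LinearMap.ker_eq_bot']
    intro g hg
    have h2 : ∑ a, g a • (fun l => D l a) = 0 := by
      funext l
      have := congrFun hg l
      simpa [Matrix.toLin'_apply, Matrix.mulVec, dotProduct, mul_comm,
        Finset.sum_apply] using this
    funext a
    exact Fintype.linearIndependent_iff.mp hli g h2 a
  obtain ⟨g, hg⟩ := LinearMap.exists_leftInverse_of_injective (Matrix.toLin' D) hker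
  set G := LinearMap.toMatrix' g with hGdef
  have hGD : G * D = 1 := by
    apply Matrix.toLin'.injective
    rw [Matrix.toLin'_mul, hGdef, Matrix.toLin'_toMatrix', Matrix.toLin'_one]
    exact hg
  intro M
  refine ⟨Matrix.of M * G, ?_⟩
  show ((Matrix.of M * G) * D : Matrix (Fin k) (Fin k) ℝ) = M
  rw [Matrix.mul_assoc, hGD, Matrix.mul_one]
  rfl

end Aux

/-- Let `C ∈ ℝ^{K×R}` have k-rank `k := k_C ≥ 1`.  Then the set
`{X ∈ ℝ^{k×K} : k_{XC} < k}` has Lebesgue measure zero (identifying `ℝ^{k×K}` with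
`ℝ^{kK}`); consequently, for almost every `X ∈ ℝ^{k×K}` the k-rank of the `k × R` matrix
`XC` equals `k_C`. -/
theorem stmt19 {K R : ℕ} (C : Matrix (Fin K) (Fin R) ℝ) (h1 : 1 ≤ kRank C) :
    volume {X : Fin (kRank C) → Fin K → ℝ | kRank (Matrix.of X * C) < kRank C} = 0 ∧
    ∀ᵐ X : Fin (kRank C) → Fin K → ℝ ∂volume, kRank (Matrix.of X * C) = kRank C := by
  obtain ⟨hkcard, hkli⟩ := kRank_spec C
  -- for each `k`-subset `s` of columns, the set of `X` where columns of `X*C` on `s`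
  -- become dependent is null
  have hnull : ∀ s : Finset (Fin R), s.card = kRank C →
      volume {X : Fin (kRank C) → Fin K → ℝ |
        ¬ LinearIndependent ℝ fun j : s => fun i => (Matrix.of X * C) i j.1} = 0 := by
    intro s hs
    set e : Fin (kRank C) ≃ s := (s.equivFinOfCardEq hs).symm with he
    set D : Matrix (Fin K) (Fin (kRank C)) ℝ := Matrix.of fun l a => C l (e a).1 with hD
    -- columns of D are linearly independent
    have hliD : LinearIndependent ℝ fun a : Fin (kRank C) => fun l => D l a := by
      have hcs := hkli s hs
      exact hcs.comp e (Equiv.injective e)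
    set L : (Fin (kRank C) → Fin K → ℝ) →ₗ[ℝ] (Fin (kRank C) → Fin (kRank C) → ℝ) :=
      { toFun := fun X => ((Matrix.of X * D : Matrix _ _ ℝ) : Fin (kRank C) → Fin (kRank C) → ℝ)
        map_add' := fun X Y => by
          show ((Matrix.of X + Matrix.of Y) * D : Matrix _ _ ℝ) = _
          rw [Matrix.add_mul]; rfl
        map_smul' := fun c X => by
          show ((c • Matrix.of X) * D : Matrix _ _ ℝ) = _
          rw [Matrix.smul_mul]; rfl } with hL
    have hsurj : Function.Surjective L := surjective_mul_right D hliD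
    have hmeas : MeasurableSet {M : Fin (kRank C) → Fin (kRank C) → ℝ |
        (Matrix.of M).det ≠ 0} := by
      have hc : Continuous fun M : Fin (kRank C) → Fin (kRank C) → ℝ => (Matrix.of M).det :=
        Continuous.matrix_det continuous_id
      exact (hc.measurable (measurableSet_singleton 0)).compl
    have hae : ∀ᵐ X : Fin (kRank C) → Fin K → ℝ ∂volume,
        L X ∈ {M : Fin (kRank C) → Fin (kRank C) → ℝ | (Matrix.of M).det ≠ 0} :=
      (MeasureTheory.ae_comp_linearMap_mem_iff (L := L)
        (μ := volume) (ν := volume) hsurj hmeas).mpr ae_det_ne_zero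
    rw [ae_iff] at hae
    apply measure_mono_null _ hae
    intro X hX
    simp only [Set.mem_setOf_eq, not_not] at hX ⊢
    by_contra hdet
    apply hX
    -- det ≠ 0 gives independence of the columns of `X * D`
    have hunit : IsUnit (Matrix.of X * D) :=
      (Matrix.isUnit_iff_isUnit_det _).mpr (isUnit_iff_ne_zero.mpr hdet)
    have hcols : LinearIndependent ℝ fun a : Fin (kRank C) => Matrix.transpose (Matrix.of X * D) a :=
      Matrix.linearIndependent_cols_iff_isUnit.mpr hunit
    -- transfer along the equivalence `e`
    have hFG : (fun a : Fin (kRank C) => Matrix.transpose (Matrix.of X * D) a)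
        = (fun j : s => fun i => (Matrix.of X * C) i j.1) ∘ e := by
      funext a
      ext i
      simp [hD, Matrix.transpose_apply, Matrix.mul_apply]
    rw [hFG] at hcols
    have := hcols.comp e.symm (Equiv.injective e.symm)
    have heq : ((fun j : s => fun i => (Matrix.of X * C) i j.1) ∘ ⇑e) ∘ ⇑e.symm
        = fun j : s => fun i => (Matrix.of X * C) i j.1 := by
      funext j
      simp
    rwa [heq] at this
  -- the bad set is contained in a finite union of null sets
  have hmain : volume {X : Fin (kRank C) → Fin K → ℝ |
      kRank (Matrix.of X * C) < kRank C} = 0 := by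
    have hsub : {X : Fin (kRank C) → Fin K → ℝ | kRank (Matrix.of X * C) < kRank C} ⊆
        ⋃ s ∈ {s : Finset (Fin R) | s.card = kRank C},
          {X : Fin (kRank C) → Fin K → ℝ |
            ¬ LinearIndependent ℝ fun j : s => fun i => (Matrix.of X * C) i j.1} := by
      intro X hX
      simp only [Set.mem_setOf_eq] at hX
      by_contra hc
      simp only [Set.mem_iUnion, Set.mem_setOf_eq, not_exists, not_and, not_not] at hc
      have : kRank C ≤ kRank (Matrix.of X * C) := by
        apply le_kRank
        · simpa using hkcard
        · intro s hs
          exact hc s hs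
      omega
    apply measure_mono_null hsub
    rw [measure_biUnion_null_iff (Set.to_countable _)]
    intro s hs
    exact hnull s hs
  refine ⟨hmain, ?_⟩
  rw [ae_iff]
  apply measure_mono_null _ hmain
  intro X hX
  simp only [Set.mem_setOf_eq] at hX ⊢
  have hle := kRank_mul_le (Matrix.of X) C
  omega
end
end
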